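/- Let A be an entrywise nonnegative n×n matrix. For α_1, α_2 with 1/2 ≤ α_1 < α_2 ≤ 1 and α = (α_1 + α_2 − 1)/(2α_2 − 1), we have α ∈ (0,1) and S_{α_1}(A) = S_α(S_{α_2}(A)), where S_β(A)_{ij} = a_{ij}^β a_{ji}^{1−β}. -/

import Mathlib

/-- The weighted geometric symmetrization `S_β(A)` with entries `a_{ij}^β a_{ji}^{1-β}`. -/
noncomputable def wgs {n : ℕ} (β : ℝ) (A : Matrix (Fin n) (Fin n) ℝ) :
    Matrix (Fin n) (Fin n) ℝ :=
  Matrix.of fun i j => A i j ^ β * A j i ^ (1 - β)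

/-- For `1/2 ≤ α₁ < α₂ ≤ 1` and `α = (α₁ + α₂ - 1)/(2α₂ - 1)`, one has
`α ∈ (0,1)` and `S_{α₁}(A) = S_α(S_{α₂}(A))`. -/
theorem wgs_comp_right {n : ℕ} (A : Matrix (Fin n) (Fin n) ℝ) (hA : ∀ i j, 0 ≤ A i j)
    (α₁ α₂ : ℝ) (h0 : 1 / 2 ≤ α₁) (h12 : α₁ < α₂) (h2 : α₂ ≤ 1) :
    0 < (α₁ + α₂ - 1) / (2 * α₂ - 1) ∧ (α₁ + α₂ - 1) / (2 * α₂ - 1) < 1 ∧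
      wgs α₁ A = wgs ((α₁ + α₂ - 1) / (2 * α₂ - 1)) (wgs α₂ A) := by
  set α : ℝ := (α₁ + α₂ - 1) / (2 * α₂ - 1) with hαdef
  have hd : (0:ℝ) < 2 * α₂ - 1 := by linarith
  have hpos : 0 < α := div_pos (by linarith) hd
  have hlt : α < 1 := (div_lt_one hd).mpr (by linarith)
  refine ⟨hpos, hlt, ?_⟩
  have he1 : α₂ * α + (1 - α₂) * (1 - α) = α₁ := by
    linear_combination (div_mul_cancel₀ (α₁ + α₂ - 1) hd.ne' : α * (2 * α₂ - 1) = α₁ + α₂ - 1)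
  have he2 : (1 - α₂) * α + α₂ * (1 - α) = 1 - α₁ := by
    linear_combination -(div_mul_cancel₀ (α₁ + α₂ - 1) hd.ne' : α * (2 * α₂ - 1) = α₁ + α₂ - 1)
  ext i j
  simp only [wgs, Matrix.of_apply]
  set a := A i j with ha
  set b := A j i with hb
  have ha0 : 0 ≤ a := hA i j
  have hb0 : 0 ≤ b := hA j i
  rw [Real.mul_rpow (Real.rpow_nonneg ha0 _) (Real.rpow_nonneg hb0 _),
      Real.mul_rpow (Real.rpow_nonneg hb0 _) (Real.rpow_nonneg ha0 _),
      ← Real.rpow_mul ha0, ← Real.rpow_mul hb0, ← Real.rpow_mul ha0, ← Real.rpow_mul hb0]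
  have h1 : α₁ ≠ 0 := by linarith
  have h2' : (1:ℝ) - α₁ ≠ 0 := by linarith
  calc a ^ α₁ * b ^ (1 - α₁)
      = a ^ (α₂ * α + (1 - α₂) * (1 - α)) * b ^ ((1 - α₂) * α + α₂ * (1 - α)) := by
        rw [he1, he2]
    _ = a ^ (α₂ * α) * a ^ ((1 - α₂) * (1 - α)) *
        (b ^ ((1 - α₂) * α) * b ^ (α₂ * (1 - α))) := by
        rw [Real.rpow_add' ha0 (by rw [he1]; exact h1),
            Real.rpow_add' hb0 (by rw [he2]; exact h2')]
    _ = a ^ (α₂ * α) * b ^ ((1 - α₂) * α) *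
        (b ^ (α₂ * (1 - α)) * a ^ ((1 - α₂) * (1 - α))) := by ring
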